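/- In a real inner product space, for nested convex sets C' ⊆ C and minimizers μ' and μ of J(ν) = ‖ν‖² − 2⟨ω, ν⟩ over C' and C respectively, one has ‖μ' − μ‖² ≤ 2 J(μ') − 2 J(μ). -/
import Mathlib


open scoped RealInnerProductSpace

theorem stmt_4 {E : Type*} [NormedAddCommGroup E] [InnerProductSpace ℝ E]
    (ω : E) {C' C : Set E} (hC' : Convex ℝ C') (hC : Convex ℝ C) (hsub : C' ⊆ C)
    (J : E → ℝ) (hJ : ∀ ν, J ν = ‖ν‖ ^ 2 - 2 * ⟪ω, ν⟫)
    {μ' μ : E} (hμ'C : μ' ∈ C') (hμC : μ ∈ C)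
    (hmin' : ∀ ν ∈ C', J μ' ≤ J ν) (hmin : ∀ ν ∈ C, J μ ≤ J ν) :
    ‖μ' - μ‖ ^ 2 ≤ 2 * (J μ' - J μ) := by
  have hmC : (1/2 : ℝ) • μ' + (1/2 : ℝ) • μ ∈ C :=
    hC (hsub hμ'C) hμC (by norm_num) (by norm_num) (by norm_num)
  have h := hmin _ hmC
  rw [hJ, hJ] at h
  rw [hJ, hJ]
  have e1 : ∀ x : E, ‖x‖ ^ 2 = ⟪x, x⟫ := fun x => (real_inner_self_eq_norm_sq x).symm
  rw [e1, e1, e1] at *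
  simp only [inner_add_add_self, inner_sub_sub_self, inner_add_right, inner_add_left, inner_smul_left,
    inner_smul_right, real_inner_smul_left, real_inner_smul_right, RCLike.conj_to_real,
    real_inner_comm μ μ'] at *
  nlinarith [h]
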